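/- (First-order optimality identity for rate-distortion.) Let $P_X$ be a pmf on finite $\mathcal{X}$, $d : \mathcal{X} \times \mathcal{Y} \to \mathbb{R}$ a distortion function on finite alphabets, $\lambda > 0$, and suppose $P_{Y|X}$ minimizes $I(X;Y) + \lambda\, \mathbb{E}[d(X,Y)]$ over all conditional pmfs from $\mathcal{X}$ to $\mathcal{Y}$, where $(X,Y) \sim P_X \circ P_{Y|X}$. Then for every $V_{Y|X} \in \mathrm{Tan}(P_{Y|X})$, $\sum_{x,y} P_X(x)\, V_{Y|X}(y|x)\, \big( \iota_{X;Y}(x;y) + \lambda\, d(x,y) \big) = 0$, where $\iota_{X;Y}(x;y) = \log_2 \frac{P_{Y|X}(y|x)}{P_Y(y)}$ with $P_Y$ the induced marginal. -/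

import Mathlib

open Filter Finset Topology


/-- first-order optimality identity for rate-distortion: if
`P_{Y|X}` minimizes `I(X;Y) + λ E[d(X,Y)]` over conditional pmfs from `𝒳` to
`𝒴`, then for every tangent direction `V ∈ Tan(P_{Y|X})`,
`∑_{x,y} P_X x · V(y|x) · (ι_{X;Y}(x;y) + λ d(x,y)) = 0`, where
`ι_{X;Y}(x;y) = log₂ (P_{Y|X}(y|x) / P_Y y)`. -/
theorem rd_first_order_optimality {𝒳 𝒴 : Type*} [Fintype 𝒳] [Fintype 𝒴]
    (P : 𝒳 → ℝ) (hP0 : ∀ x, 0 ≤ P x) (hP1 : ∑ x, P x = 1)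
    (d : 𝒳 → 𝒴 → ℝ) (lam : ℝ) (hlam : 0 < lam)
    (Q : 𝒳 → 𝒴 → ℝ) (hQ0 : ∀ x y, 0 ≤ Q x y) (hQ1 : ∀ x, ∑ y, Q x y = 1)
    -- `Q = P_{Y|X}` minimizes `I(X;Y) + λ E[d(X,Y)]` over conditional pmfs:
    (hopt : ∀ Q' : 𝒳 → 𝒴 → ℝ, (∀ x y, 0 ≤ Q' x y) → (∀ x, ∑ y, Q' x y = 1) →
      (∑ x, ∑ y, P x * Q x y * Real.logb 2 (Q x y / (∑ x', P x' * Q x' y)))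
          + lam * ∑ x, ∑ y, P x * Q x y * d x y ≤
        (∑ x, ∑ y, P x * Q' x y * Real.logb 2 (Q' x y / (∑ x', P x' * Q' x' y)))
          + lam * ∑ x, ∑ y, P x * Q' x y * d x y)
    -- tangent direction `V ∈ Tan(P_{Y|X})`:
    (V : 𝒳 → 𝒴 → ℝ) (hV0 : ∀ x y, Q x y = 0 → V x y = 0)
    (hVsum : ∀ x, ∑ y, V x y = 0) :
    ∑ x, ∑ y, P x * V x y *
      (Real.logb 2 (Q x y / (∑ x', P x' * Q x' y)) + lam * d x y) = 0 := by
  classical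
  set M : 𝒴 → ℝ := fun y => ∑ x', P x' * Q x' y with hMdef
  set N : 𝒴 → ℝ := fun y => ∑ x', P x' * V x' y with hNdef
  have hlog2 : Real.log 2 ≠ 0 := ne_of_gt (Real.log_pos one_lt_two)
  have hMnn : ∀ y, 0 ≤ M y := fun y =>
    Finset.sum_nonneg fun x _ => mul_nonneg (hP0 x) (hQ0 x y)
  have hMzero : ∀ y, M y = 0 → ∀ x, P x * Q x y = 0 := by
    intro y hy x
    exact (Finset.sum_eq_zero_iff_of_nonneg
      (fun x _ => mul_nonneg (hP0 x) (hQ0 x y))).1 hy x (mem_univ x)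
  have hPV0 : ∀ y, M y = 0 → ∀ x, P x * V x y = 0 := by
    intro y hy x
    rcases mul_eq_zero.1 (hMzero y hy x) with h | h
    · simp [h]
    · simp [hV0 x y h]
  have hNzero : ∀ y, M y = 0 → N y = 0 := by
    intro y hy
    exact Finset.sum_eq_zero fun x _ => hPV0 y hy x
  -- the perturbed objective
  set f : ℝ → ℝ := fun t =>
    (∑ x, ∑ y, P x * (Q x y + t * V x y) *
        Real.logb 2 ((Q x y + t * V x y) / (∑ x', P x' * (Q x' y + t * V x' y))))
      + lam * ∑ x, ∑ y, P x * (Q x y + t * V x y) * d x y with hfdef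
  -- inner marginal as affine function of t
  have hMt : ∀ (y : 𝒴) (t : ℝ),
      (∑ x', P x' * (Q x' y + t * V x' y)) = M y + t * N y := by
    intro y t
    simp only [hMdef, hNdef, mul_add, Finset.sum_add_distrib, Finset.mul_sum]
    congr 1
    apply Finset.sum_congr rfl
    intro x _
    ring
  -- local minimality
  have hev : ∀ᶠ t in 𝓝 (0 : ℝ), ∀ x y, 0 ≤ Q x y + t * V x y := by
    rw [Filter.eventually_all]
    intro x
    rw [Filter.eventually_all]
    intro y
    rcases eq_or_lt_of_le (hQ0 x y) with h | h
    · have hv : V x y = 0 := hV0 x y h.symm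
      filter_upwards with t
      simp [← h, hv]
    · have hc : ContinuousAt (fun t : ℝ => Q x y + t * V x y) 0 := by fun_prop
      have := hc.eventually_mem (lt_mem_nhds (show (0 : ℝ) < Q x y + 0 * V x y by simpa))
      exact this.mono fun t ht => le_of_lt ht
  have hmin : IsLocalMin f 0 := by
    filter_upwards [hev] with t ht
    have hsum : ∀ x, ∑ y, (Q x y + t * V x y) = 1 := by
      intro x
      rw [Finset.sum_add_distrib, hQ1, ← Finset.mul_sum, hVsum]
      ring
    have h := hopt (fun x y => Q x y + t * V x y) (fun x y => ht x y) hsum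
    have hf0 : f 0 =
        (∑ x, ∑ y, P x * Q x y * Real.logb 2 (Q x y / (∑ x', P x' * Q x' y)))
          + lam * ∑ x, ∑ y, P x * Q x y * d x y := by
      simp [hfdef]
    rw [hf0]
    exact h
  -- derivative of the affine map t ↦ Q + tV
  have hu : ∀ x y, HasDerivAt (fun t : ℝ => Q x y + t * V x y) (V x y) 0 := by
    intro x y
    simpa using ((hasDerivAt_id (0 : ℝ)).mul_const (V x y)).const_add (Q x y)
  have hm : ∀ y, HasDerivAt (fun t : ℝ => M y + t * N y) (N y) 0 := by
    intro y
    simpa using ((hasDerivAt_id (0 : ℝ)).mul_const (N y)).const_add (M y)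
  -- derivative of each information term
  set D : 𝒳 → 𝒴 → ℝ := fun x y =>
    P x * V x y * Real.logb 2 (Q x y / M y) + P x * V x y / Real.log 2
      - P x * Q x y * N y / (M y * Real.log 2) with hDdef
  have hterm : ∀ x y, HasDerivAt (fun t : ℝ => P x * (Q x y + t * V x y) *
      Real.logb 2 ((Q x y + t * V x y) / (∑ x', P x' * (Q x' y + t * V x' y))))
      (D x y) 0 := by
    intro x y
    rcases eq_or_ne (P x) 0 with hPx | hPx
    · have hD : D x y = 0 := by simp [hDdef, hPx]
      rw [hD]
      have heq : (fun t : ℝ => P x * (Q x y + t * V x y) *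
          Real.logb 2 ((Q x y + t * V x y) / (∑ x', P x' * (Q x' y + t * V x' y))))
          = fun _ => (0 : ℝ) := by
        funext t; simp [hPx]
      rw [heq]
      exact hasDerivAt_const 0 0
    rcases eq_or_lt_of_le (hQ0 x y) with hQxy | hQxy
    · have hv : V x y = 0 := hV0 x y hQxy.symm
      have hD : D x y = 0 := by simp [hDdef, ← hQxy, hv]
      rw [hD]
      have heq : (fun t : ℝ => P x * (Q x y + t * V x y) *
          Real.logb 2 ((Q x y + t * V x y) / (∑ x', P x' * (Q x' y + t * V x' y))))
          = fun _ => (0 : ℝ) := by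
        funext t; simp [← hQxy, hv]
      rw [heq]
      exact hasDerivAt_const 0 0
    · have hPpos : 0 < P x := lt_of_le_of_ne (hP0 x) (Ne.symm hPx)
      have hMpos : 0 < M y := by
        apply lt_of_lt_of_le (mul_pos hPpos hQxy)
        exact Finset.single_le_sum (fun x _ => mul_nonneg (hP0 x) (hQ0 x y)) (mem_univ x)
      have hQne : Q x y ≠ 0 := ne_of_gt hQxy
      have hMne : M y ≠ 0 := ne_of_gt hMpos
      have hlogu : HasDerivAt (fun t : ℝ => Real.log (Q x y + t * V x y))
          ((Q x y)⁻¹ * V x y) 0 := by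
        have h := (Real.hasDerivAt_log (by simpa using hQne)).comp 0 (hu x y)
        simp only [zero_mul, add_zero] at h
        exact h
      have hlogm : HasDerivAt (fun t : ℝ => Real.log (M y + t * N y))
          ((M y)⁻¹ * N y) 0 := by
        have h := (Real.hasDerivAt_log (by simpa using hMne)).comp 0 (hm y)
        simp only [zero_mul, add_zero] at h
        exact h
      have hfull : HasDerivAt (fun t : ℝ => P x * ((Q x y + t * V x y) *
          ((Real.log (Q x y + t * V x y) - Real.log (M y + t * N y)) / Real.log 2)))
          (D x y) 0 := by
        have h1 := ((((hu x y).mul ((hlogu.sub hlogm).div_const (Real.log 2)))).const_mul (P x))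
        convert h1 using 1
        · rfl
        · rfl
        · rfl
        have hlb : Real.logb 2 (Q x y / M y)
            = (Real.log (Q x y) - Real.log (M y)) / Real.log 2 := by
          rw [Real.logb, Real.log_div hQne hMne]
        rw [hDdef]
        simp only [hlb, Pi.sub_apply, zero_mul, add_zero]
        field_simp
        ring
      apply hfull.congr_of_eventuallyEq
      have e1 : ∀ᶠ t in 𝓝 (0 : ℝ), 0 < Q x y + t * V x y := by
        have hc : ContinuousAt (fun t : ℝ => Q x y + t * V x y) 0 := by fun_prop
        exact hc.eventually_mem (lt_mem_nhds (show (0 : ℝ) < Q x y + 0 * V x y by simpa))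
      have e2 : ∀ᶠ t in 𝓝 (0 : ℝ), 0 < M y + t * N y := by
        have hc : ContinuousAt (fun t : ℝ => M y + t * N y) 0 := by fun_prop
        exact hc.eventually_mem (lt_mem_nhds (show (0 : ℝ) < M y + 0 * N y by simpa))
      filter_upwards [e1, e2] with t h1 h2
      rw [hMt y t, Real.logb, Real.log_div (ne_of_gt h1) (ne_of_gt h2)]
      ring
  -- derivative of the distortion term
  have hlin : HasDerivAt (fun t : ℝ => lam * ∑ x, ∑ y, P x * (Q x y + t * V x y) * d x y)
      (lam * ∑ x, ∑ y, P x * V x y * d x y) 0 := by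
    apply HasDerivAt.const_mul
    apply HasDerivAt.fun_sum
    intro x _
    apply HasDerivAt.fun_sum
    intro y _
    exact ((hu x y).const_mul (P x)).mul_const (d x y)
  -- total derivative
  have hderiv : HasDerivAt f
      ((∑ x, ∑ y, D x y) + lam * ∑ x, ∑ y, P x * V x y * d x y) 0 := by
    rw [hfdef]
    apply HasDerivAt.add _ hlin
    apply HasDerivAt.fun_sum
    intro x _
    apply HasDerivAt.fun_sum
    intro y _
    exact hterm x y
  have hS : (∑ x, ∑ y, D x y) + lam * ∑ x, ∑ y, P x * V x y * d x y = 0 :=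
    hmin.hasDerivAt_eq_zero hderiv
  -- the extra terms sum to zero
  have hextra : ∑ x, ∑ y, (P x * V x y / Real.log 2
      - P x * Q x y * N y / (M y * Real.log 2)) = 0 := by
    rw [Finset.sum_comm]
    apply Finset.sum_eq_zero
    intro y _
    rcases eq_or_ne (M y) 0 with hy | hy
    · apply Finset.sum_eq_zero
      intro x _
      simp [hMzero y hy x, hPV0 y hy x]
    · rw [Finset.sum_sub_distrib]
      have e1 : ∑ x, P x * V x y / Real.log 2 = N y / Real.log 2 := by
        rw [← Finset.sum_div]
      have e2 : ∑ x, P x * Q x y * N y / (M y * Real.log 2) = N y / Real.log 2 := by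
        rw [← Finset.sum_div, ← Finset.sum_mul]
        rw [show (∑ x, P x * Q x y) = M y from rfl]
        rw [mul_div_mul_left _ _ hy]
      rw [e1, e2, sub_self]
  -- put everything together
  have expand : ∑ x, ∑ y, P x * V x y *
      (Real.logb 2 (Q x y / M y) + lam * d x y)
      = ((∑ x, ∑ y, D x y) + lam * ∑ x, ∑ y, P x * V x y * d x y)
        - ∑ x, ∑ y, (P x * V x y / Real.log 2
          - P x * Q x y * N y / (M y * Real.log 2)) := by
    rw [hDdef]
    simp only [Finset.mul_sum, ← Finset.sum_add_distrib, ← Finset.sum_sub_distrib]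
    apply Finset.sum_congr rfl
    intro x _
    apply Finset.sum_congr rfl
    intro y _
    ring
  rw [expand, hS, hextra, sub_zero]
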